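/- The number of Dyck paths of length 2N with maximal height at most h equals Σ_{k∈ℤ} [ C(2N, N − k(h+2)) − C(2N, N + 1 − k(h+2)) ], equivalently the total Catalan number C_N minus Σ_{k≥1} [ C(2N, N − k(h+2) − 1) − 2·C(2N, N − k(h+2)) + C(2N, N − k(h+2) + 1) ] has the stated reflection-principle form. -/

import Mathlib

def stepVal (b : Bool) : ℤ := if b then 1 else -1

def pathHeight {n : ℕ} (s : Fin n → Bool) (k : ℕ) : ℤ :=
  ∑ i : Fin n, if (i : ℕ) < k then stepVal (s i) else 0

def IsBoundedDyck (n h : ℕ) (s : Fin (2 * n) → Bool) : Prop :=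
  pathHeight s (2 * n) = 0 ∧ ∀ k ≤ 2 * n, 0 ≤ pathHeight s k ∧ pathHeight s k ≤ (h : ℤ)

/-- The number of Dyck paths of length `2n` with maximal height at most `h`. -/
noncomputable def dyckCount (n h : ℕ) : ℕ :=
  Nat.card {s : Fin (2 * n) → Bool // IsBoundedDyck n h s}

/-- Binomial coefficient `C(n,k)` for an integer `k`, zero outside `0 ≤ k ≤ n`. -/
def chooseZ (n : ℕ) (k : ℤ) : ℤ :=
  if 0 ≤ k ∧ k ≤ (n : ℤ) then (n.choose k.toNat : ℤ) else 0

lemma chooseZ_eq_zero_of_lt (n : ℕ) {k : ℤ} (hk : k < 0) : chooseZ n k = 0 := by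
  simp [chooseZ, not_le.mpr hk]

lemma chooseZ_eq_zero_of_gt (n : ℕ) {k : ℤ} (hk : (n : ℤ) < k) : chooseZ n k = 0 := by
  simp only [chooseZ]
  rw [if_neg]; rintro ⟨-, h⟩; omega

lemma chooseZ_zero (n : ℕ) : chooseZ n 0 = 1 := by
  simp [chooseZ]

lemma chooseZ_pascal (n : ℕ) (k : ℤ) :
    chooseZ (n + 1) k = chooseZ n k + chooseZ n (k - 1) := by
  rcases lt_or_ge k 0 with hk | hk
  · rw [chooseZ_eq_zero_of_lt _ hk, chooseZ_eq_zero_of_lt _ hk,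
      chooseZ_eq_zero_of_lt _ (by omega)]; ring
  rcases eq_or_lt_of_le hk with hk0 | hk0
  · rw [← hk0, chooseZ_zero, chooseZ_zero,
      show chooseZ n ((0:ℤ)-1) = 0 from chooseZ_eq_zero_of_lt n (by norm_num)]
    ring
  rcases le_or_gt k (n:ℤ) with hk1 | hk1
  · simp only [chooseZ]
    rw [if_pos (by constructor <;> push_cast <;> omega),
      if_pos (by constructor <;> omega), if_pos (by constructor <;> omega)]
    have e1 : k.toNat = (k-1).toNat + 1 := by omega
    rw [e1, Nat.choose_succ_succ']
    push_cast; ring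
  rcases le_or_gt k ((n:ℤ)+1) with hk2 | hk2
  · have hk3 : k = (n:ℤ) + 1 := by omega
    subst hk3
    rw [show chooseZ n ((n:ℤ)+1) = 0 from chooseZ_eq_zero_of_gt n (by omega)]
    simp only [chooseZ]
    rw [if_pos (by constructor <;> push_cast <;> omega), if_pos (by constructor <;> omega)]
    have e1 : ((n:ℤ)+1).toNat = n + 1 := by omega
    have e2 : ((n:ℤ)+1-1).toNat = n := by omega
    rw [e1, e2]; simp
  · rw [show chooseZ (n+1) k = 0 from chooseZ_eq_zero_of_gt _ (by push_cast; omega),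
      show chooseZ n k = 0 from chooseZ_eq_zero_of_gt _ (by omega),
      show chooseZ n (k-1) = 0 from chooseZ_eq_zero_of_gt _ (by omega)]; ring

lemma chooseZ_symm (n : ℕ) (k : ℤ) : chooseZ n k = chooseZ n ((n : ℤ) - k) := by
  rcases lt_or_ge k 0 with hk | hk
  · rw [chooseZ_eq_zero_of_lt _ hk, chooseZ_eq_zero_of_gt _ (by omega)]
  rcases lt_or_ge (n:ℤ) k with hk2 | hk2
  · rw [chooseZ_eq_zero_of_gt _ hk2, chooseZ_eq_zero_of_lt _ (by omega)]
  simp only [chooseZ]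
  rw [if_pos ⟨hk, hk2⟩, if_pos ⟨by omega, by omega⟩]
  have e : ((n:ℤ) - k).toNat = n - k.toNat := by omega
  rw [e, Nat.choose_symm (by omega)]

/-- Unconstrained walk count from 0 to m in n steps. -/
def W (n : ℕ) (m : ℤ) : ℤ :=
  if 2 ∣ ((n : ℤ) + m) then chooseZ n (((n : ℤ) + m) / 2) else 0

lemma W_succ (n : ℕ) (m : ℤ) : W (n + 1) m = W n (m - 1) + W n (m + 1) := by
  by_cases hd : 2 ∣ ((n : ℤ) + 1 + m)
  · have h1 : 2 ∣ ((n : ℤ) + (m + 1)) := by omega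
    have h2' : 2 ∣ ((n : ℤ) + (m - 1)) := by omega
    simp only [W]
    rw [if_pos (by push_cast; omega), if_pos h2', if_pos h1]
    have e1 : ((n:ℤ) + (m-1))/2 = (((n:ℕ):ℤ) + 1 + m)/2 - 1 := by omega
    have e2 : ((n:ℤ) + (m+1))/2 = (((n:ℕ):ℤ) + 1 + m)/2 := by omega
    have e3 : (((n+1:ℕ):ℤ) + m)/2 = (((n:ℕ):ℤ) + 1 + m)/2 := by push_cast; omega
    rw [e1, e2, e3, chooseZ_pascal]
    ring
  · simp only [W]
    rw [if_neg (by push_cast; omega), if_neg (by omega), if_neg (by omega)]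
    ring

lemma W_eq_zero (n : ℕ) (m : ℤ) (hm : (n : ℤ) < |m|) : W n m = 0 := by
  simp only [W]
  split_ifs with hd
  · rcases abs_cases m with ⟨he, -⟩ | ⟨he, -⟩
    · exact chooseZ_eq_zero_of_gt _ (by omega)
    · exact chooseZ_eq_zero_of_lt _ (by omega)
  · rfl

lemma W_zero (m : ℤ) : W 0 m = if m = 0 then 1 else 0 := by
  simp only [W]
  rcases eq_or_ne m 0 with rfl | hm
  · norm_num [chooseZ_zero]
  · rw [if_neg hm]
    split_ifs with hd
    · rcases lt_or_ge m 0 with h | h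
      · exact chooseZ_eq_zero_of_lt _ (by omega)
      · exact chooseZ_eq_zero_of_gt _ (by omega)
    · rfl

/-- Recursive count of bounded paths of length `n` from `0` to `j` staying in `[0,h]`. -/
def P (h : ℕ) : ℕ → ℤ → ℕ
  | 0, j => if j = 0 then 1 else 0
  | n+1, j => if 0 ≤ j ∧ j ≤ (h:ℤ) then P h n (j-1) + P h n (j+1) else 0

lemma telescope (f : ℤ → ℤ) (M : ℕ) (a : ℤ) :
    ∑ k ∈ Finset.Icc a (a + M), (f k - f (k-1)) = f (a + M) - f (a - 1) := by
  induction M with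
  | zero => simp
  | succ m ih =>
    have h1 : Finset.Icc a (a + (m+1:ℕ)) = insert (a + m + 1) (Finset.Icc a (a + m)) := by
      ext x
      simp only [Finset.mem_Icc, Finset.mem_insert]
      push_cast
      omega
    rw [h1, Finset.sum_insert (by simp)]
    rw [ih]
    push_cast
    ring_nf

lemma P_eq (N h : ℕ) : ∀ n, n ≤ 2 * N → ∀ j : ℤ, -1 ≤ j → j ≤ (h:ℤ) + 1 →
    (P h n j : ℤ) = ∑ k ∈ Finset.Icc (-(N:ℤ)) (N:ℤ),
      (W n (j + 2 * k * ((h:ℤ) + 2)) - W n (-2 - j + 2 * k * ((h:ℤ) + 2))) := by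
  intro n
  induction n with
  | zero =>
    intro _ j hj1 hj2
    rw [Finset.sum_eq_single 0]
    · simp only [W_zero]
      rcases eq_or_ne j 0 with rfl | hj
      · norm_num [P]
      · have h2 : ¬ (j + 2 * 0 * ((h:ℤ)+2) = 0) := by omega
        have h3 : ¬ (-2 - j + 2 * 0 * ((h:ℤ)+2) = 0) := by omega
        rw [if_neg h2, if_neg h3]
        simp [P, hj]
    · intro k hk hk0
      have ha : 2 * ((h:ℤ) + 2) ≤ |2 * k * ((h:ℤ) + 2)| := by
        rcases lt_or_gt_of_ne hk0 with h' | h'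
        · rw [abs_of_nonpos (by nlinarith)]; nlinarith
        · rw [abs_of_nonneg (by positivity)]; nlinarith
      have hcases := abs_cases (2 * k * ((h:ℤ) + 2))
      rw [W_zero, W_zero,
        if_neg (by rcases hcases with ⟨he, -⟩ | ⟨he, -⟩ <;> omega),
        if_neg (by rcases hcases with ⟨he, -⟩ | ⟨he, -⟩ <;> omega)]
      ring
    · intro h0
      exfalso
      apply h0
      simp only [Finset.mem_Icc]
      omega
  | succ n ih =>
    intro hn j hj1 hj2
    have hn' : n ≤ 2 * N := by omega
    rcases eq_or_lt_of_le hj1 with hjneg | hj1'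
    · rw [← hjneg]
      have hP : P h (n+1) (-1 : ℤ) = 0 := by simp [P]
      rw [hP]
      rw [Finset.sum_eq_zero]
      · simp
      intro k _
      have e : (-2 : ℤ) - (-1) + 2 * k * ((h:ℤ)+2) = -1 + 2 * k * ((h:ℤ)+2) := by ring
      rw [e, sub_self]
    rcases eq_or_lt_of_le hj2 with hjtop | hj2'
    · subst hjtop
      have hP : P h (n+1) ((h:ℤ)+1) = 0 := by
        simp only [P]
        rw [if_neg (by omega)]
      rw [hP]
      have e : ∀ k : ℤ, W (n+1) ((h:ℤ)+1 + 2 * k * ((h:ℤ)+2)) -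
          W (n+1) (-2 - ((h:ℤ)+1) + 2 * k * ((h:ℤ)+2)) =
          (fun k : ℤ => W (n+1) ((h:ℤ)+1 + 2 * k * ((h:ℤ)+2))) k -
          (fun k : ℤ => W (n+1) ((h:ℤ)+1 + 2 * k * ((h:ℤ)+2))) (k - 1) := by
        intro k
        simp only []
        congr 2
        ring
      rw [Finset.sum_congr rfl (fun k _ => e k)]
      have hIcc : Finset.Icc (-(N:ℤ)) (N:ℤ) = Finset.Icc (-(N:ℤ)) ((-(N:ℤ)) + (2*N : ℕ)) := by
        congr 1; push_cast; ring
      rw [hIcc, telescope]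
      have z1 : W (n+1) ((h:ℤ)+1 + 2 * ((-(N:ℤ)) + (2*N:ℕ)) * ((h:ℤ)+2)) = 0 := by
        apply W_eq_zero
        have e2 : (-(N:ℤ)) + (2*N:ℕ) = (N:ℤ) := by push_cast; ring
        rw [e2, abs_of_nonneg (by positivity)]
        push_cast; nlinarith
      have z2 : W (n+1) ((h:ℤ)+1 + 2 * ((-(N:ℤ)) - 1) * ((h:ℤ)+2)) = 0 := by
        apply W_eq_zero
        rw [abs_of_nonpos (by nlinarith)]
        push_cast; nlinarith
      rw [z1, z2]
      ring
    · have hj0 : 0 ≤ j := by omega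
      have hjh : j ≤ (h:ℤ) := by omega
      have hP : (P h (n+1) j : ℤ) = (P h n (j-1) : ℤ) + (P h n (j+1) : ℤ) := by
        simp only [P]
        rw [if_pos ⟨hj0, hjh⟩]
        push_cast; ring
      rw [hP, ih hn' (j-1) (by omega) (by omega), ih hn' (j+1) (by omega) (by omega),
        ← Finset.sum_add_distrib]
      apply Finset.sum_congr rfl
      intro k _
      rw [W_succ, W_succ]
      have e1 : j + 2*k*((h:ℤ)+2) - 1 = j - 1 + 2*k*((h:ℤ)+2) := by ring
      have e2 : j + 2*k*((h:ℤ)+2) + 1 = j + 1 + 2*k*((h:ℤ)+2) := by ring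
      have e3 : -2 - j + 2*k*((h:ℤ)+2) - 1 = -2 - (j+1) + 2*k*((h:ℤ)+2) := by ring
      have e4 : -2 - j + 2*k*((h:ℤ)+2) + 1 = -2 - (j-1) + 2*k*((h:ℤ)+2) := by ring
      rw [e1, e2, e3, e4]
      ring

lemma pathHeight_init {n : ℕ} (s : Fin (n+1) → Bool) (k : ℕ) (hk : k ≤ n) :
    pathHeight (Fin.init s) k = pathHeight s k := by
  simp only [pathHeight, Fin.sum_univ_castSucc, Fin.coe_castSucc, Fin.val_last]
  rw [if_neg (by omega)]
  simp [Fin.init]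

lemma pathHeight_top {n : ℕ} (s : Fin (n+1) → Bool) :
    pathHeight s (n+1) = pathHeight s n + stepVal (s (Fin.last n)) := by
  simp only [pathHeight, Fin.sum_univ_castSucc, Fin.coe_castSucc, Fin.val_last]
  have e : ∀ i : Fin n, (if (i:ℕ) < n + 1 then stepVal (s i.castSucc) else 0) =
      (if (i:ℕ) < n then stepVal (s i.castSucc) else 0) := by
    intro i; rw [if_pos (by omega), if_pos i.isLt]
  rw [Finset.sum_congr rfl (fun i _ => e i), if_pos (by omega), if_neg (by omega)]
  ring

def DSet (h n : ℕ) (j : ℤ) : Finset (Fin n → Bool) :=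
  Finset.univ.filter
    (fun s => (∀ k ≤ n, 0 ≤ pathHeight s k ∧ pathHeight s k ≤ (h:ℤ)) ∧ pathHeight s n = j)

lemma card_DSet (h : ℕ) : ∀ n (j : ℤ), (DSet h n j).card = P h n j := by
  intro n
  induction n with
  | zero =>
    intro j
    have hph : ∀ (s : Fin 0 → Bool) (k : ℕ), pathHeight s k = 0 := by
      intro s k; simp [pathHeight]
    have hD : DSet h 0 j = if j = 0 then Finset.univ else ∅ := by
      split_ifs with hj
      · subst hj
        rw [Finset.eq_univ_iff_forall]
        intro s
        simp only [DSet, Finset.mem_filter, Finset.mem_univ, true_and]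
        exact ⟨fun k _ => by rw [hph]; exact ⟨le_refl 0, by positivity⟩, hph s 0⟩
      · rw [Finset.eq_empty_iff_forall_notMem]
        intro s hs
        simp only [DSet, Finset.mem_filter, Finset.mem_univ, true_and] at hs
        rw [hph] at hs
        exact hj hs.2.symm
    rw [hD]
    split_ifs with hj <;> simp [P, hj]
  | succ n ih =>
    intro j
    by_cases hj : 0 ≤ j ∧ j ≤ (h:ℤ)
    · have hdisj : Disjoint (DSet h n (j-1)) (DSet h n (j+1)) := by
        rw [Finset.disjoint_left]
        intro t ht1 ht2
        simp only [DSet, Finset.mem_filter] at ht1 ht2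
        omega
      have hcard : (DSet h (n+1) j).card = (DSet h n (j-1) ∪ DSet h n (j+1)).card := by
        apply Finset.card_nbij' (i := fun s => Fin.init s)
          (j := fun t => Fin.snoc t (decide (pathHeight t n = j - 1)))
        · intro s hs
          simp only [Finset.mem_coe, DSet, Finset.mem_filter, Finset.mem_univ, true_and] at hs
          obtain ⟨hb, he⟩ := hs
          have hbd : ∀ k ≤ n, 0 ≤ pathHeight (Fin.init s) k ∧
              pathHeight (Fin.init s) k ≤ (h:ℤ) := by
            intro k hk
            rw [pathHeight_init s k hk]
            exact hb k (by omega)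
          have hend : pathHeight (Fin.init s) n = pathHeight s n := pathHeight_init s n le_rfl
          have htop : pathHeight s (n+1) = pathHeight s n + stepVal (s (Fin.last n)) :=
            pathHeight_top s
          simp only [Finset.mem_coe, Finset.mem_union, DSet, Finset.mem_filter, Finset.mem_univ, true_and]
          cases hsl : s (Fin.last n)
          · right
            refine ⟨hbd, ?_⟩
            rw [hend]
            rw [hsl] at htop
            simp [stepVal] at htop
            omega
          · left
            refine ⟨hbd, ?_⟩
            rw [hend]
            rw [hsl] at htop
            simp [stepVal] at htop
            omega
        · intro t ht
          simp only [Finset.mem_coe, Finset.mem_union, DSet, Finset.mem_filter, Finset.mem_univ, true_and] at ht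
          set b : Bool := decide (pathHeight t n = j - 1) with hbdef
          have hinit : Fin.init (Fin.snoc t b : Fin (n+1) → Bool) = t := by simp
          have hbd' : ∀ k ≤ n, pathHeight (Fin.snoc t b : Fin (n+1) → Bool) k = pathHeight t k := by
            intro k hk
            rw [← pathHeight_init _ k hk, hinit]
          have htop : pathHeight (Fin.snoc t b : Fin (n+1) → Bool) (n+1) =
              pathHeight t n + stepVal b := by
            rw [pathHeight_top, hbd' n le_rfl, Fin.snoc_last]
          simp only [Finset.mem_coe, DSet, Finset.mem_filter, Finset.mem_univ, true_and]
          rcases ht with ⟨hb1, he1⟩ | ⟨hb1, he1⟩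
          · have hbt : b = true := by rw [hbdef]; simp [he1]
            have hst : stepVal b = 1 := by rw [hbt]; simp [stepVal]
            rw [hst] at htop
            constructor
            · intro k hk
              rcases Nat.lt_or_ge k (n+1) with hk' | hk'
              · rw [hbd' k (by omega)]; exact hb1 k (by omega)
              · have : k = n + 1 := by omega
                subst this
                rw [htop, he1]
                omega
            · rw [htop, he1]; ring
          · have hne : pathHeight t n ≠ j - 1 := by omega
            have hbt : b = false := by rw [hbdef]; simp [hne]
            have hst : stepVal b = -1 := by rw [hbt]; simp [stepVal]
            rw [hst] at htop
            constructor
            · intro k hk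
              rcases Nat.lt_or_ge k (n+1) with hk' | hk'
              · rw [hbd' k (by omega)]; exact hb1 k (by omega)
              · have : k = n + 1 := by omega
                subst this
                rw [htop, he1]
                omega
            · rw [htop, he1]; ring
        · intro s hs
          simp only [Finset.mem_coe, DSet, Finset.mem_filter, Finset.mem_univ, true_and] at hs
          obtain ⟨hb, he⟩ := hs
          have htop : pathHeight s (n+1) = pathHeight s n + stepVal (s (Fin.last n)) :=
            pathHeight_top s
          have hend : pathHeight (Fin.init s) n = pathHeight s n := pathHeight_init s n le_rfl
          have hbeq : decide (pathHeight (Fin.init s) n = j - 1) = s (Fin.last n) := by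
            cases hsl : s (Fin.last n)
            · rw [hsl] at htop
              simp [stepVal] at htop
              have hne : pathHeight (Fin.init s) n ≠ j - 1 := by rw [hend]; omega
              simp [hne]
            · rw [hsl] at htop
              simp [stepVal] at htop
              have heq : pathHeight (Fin.init s) n = j - 1 := by rw [hend]; omega
              simp [heq]
          beta_reduce; rw [hbeq]
          exact Fin.snoc_init_self s
        · intro t ht
          simp
      rw [hcard, Finset.card_union_of_disjoint hdisj, ih, ih]
      simp only [P]
      rw [if_pos hj]
    · have hempty : DSet h (n+1) j = ∅ := by
        rw [Finset.eq_empty_iff_forall_notMem]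
        intro s hs
        simp only [DSet, Finset.mem_filter, Finset.mem_univ, true_and] at hs
        obtain ⟨hb, he⟩ := hs
        have := hb (n+1) le_rfl
        rw [he] at this
        exact hj this
      rw [hempty]
      simp only [P]
      rw [if_neg hj]
      simp

lemma dyckCount_eq (N h : ℕ) : dyckCount N h = P h (2*N) 0 := by
  classical
  rw [← card_DSet]
  rw [dyckCount, Nat.card_eq_fintype_card, Fintype.card_subtype]
  congr 1
  apply Finset.filter_congr
  intro s _
  constructor
  · rintro ⟨h1, h2⟩; exact ⟨h2, h1⟩
  · rintro ⟨h1, h2⟩; exact ⟨h2, h1⟩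

theorem stmt4 (N h : ℕ) :
    (dyckCount N h : ℤ) =
      ∑ k ∈ Finset.Icc (-(N : ℤ)) (N : ℤ),
        (chooseZ (2 * N) ((N : ℤ) - k * ((h : ℤ) + 2)) -
          chooseZ (2 * N) ((N : ℤ) + 1 - k * ((h : ℤ) + 2))) := by
  rw [dyckCount_eq, P_eq N h (2*N) le_rfl 0 (by norm_num) (by positivity)]
  have hW1 : ∀ k : ℤ, W (2*N) ((0:ℤ) + 2*k*((h:ℤ)+2)) =
      chooseZ (2*N) ((N:ℤ) + k*((h:ℤ)+2)) := by
    intro k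
    simp only [W]
    rw [if_pos ⟨(N:ℤ) + k*((h:ℤ)+2), by push_cast; ring⟩]
    congr 1
    rw [show ((2*N:ℕ):ℤ) + ((0:ℤ) + 2*k*((h:ℤ)+2)) = 2*((N:ℤ) + k*((h:ℤ)+2)) from by
      push_cast; ring]
    rw [Int.mul_ediv_cancel_left _ (by norm_num)]
  have hW2 : ∀ k : ℤ, W (2*N) (-2 - (0:ℤ) + 2*k*((h:ℤ)+2)) =
      chooseZ (2*N) ((N:ℤ) - 1 + k*((h:ℤ)+2)) := by
    intro k
    simp only [W]
    rw [if_pos ⟨(N:ℤ) - 1 + k*((h:ℤ)+2), by push_cast; ring⟩]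
    congr 1
    rw [show ((2*N:ℕ):ℤ) + (-2 - (0:ℤ) + 2*k*((h:ℤ)+2)) = 2*((N:ℤ) - 1 + k*((h:ℤ)+2)) from by
      push_cast; ring]
    rw [Int.mul_ediv_cancel_left _ (by norm_num)]
  rw [Finset.sum_congr rfl (fun k _ => by rw [hW1 k, hW2 k])]
  rw [Finset.sum_sub_distrib, Finset.sum_sub_distrib]
  congr 1
  · apply Finset.sum_nbij' (i := fun k : ℤ => -k) (j := fun k : ℤ => -k)
    · intro a ha; simp only [Finset.mem_Icc] at ha ⊢; omega
    · intro a ha; simp only [Finset.mem_Icc] at ha ⊢; omega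
    · intro a _; ring
    · intro a _; ring
    · intro a _; congr 1; ring
  · apply Finset.sum_congr rfl
    intro k _
    rw [chooseZ_symm]
    congr 1
    push_cast
    ring
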